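/- Let I₁ = {i : ξ¹_i = ξ²_i}, I₂ = {i : ξ¹_i ≠ ξ²_i}, and assume ξ¹ ≠ ±ξ² so I₁, I₂ ≠ ∅. Then every x ∈ ℝ^N with x_i = 0 for i ∉ I₁ and Σ_{i∈I₁} x_i = 0 is an eigenvector of the Jacobian J_{ξ¹} with eigenvalue −2(|I₁|/N + ε). -/
import Mathlib


/-- Vectors supported on I₁ with zero sum are eigenvectors of J_{ξ¹} with
eigenvalue −2(|I₁|/N + ε). -/
theorem stmt_4 (N : ℕ) (hN : 1 ≤ N) (ε : ℝ) (ξ1 ξ2 : Fin N → ℝ)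
    (hξ1 : ∀ i, ξ1 i = 1 ∨ ξ1 i = -1) (hξ2 : ∀ i, ξ2 i = 1 ∨ ξ2 i = -1)
    (hne : ξ1 ≠ ξ2) (hne' : ξ1 ≠ -ξ2)
    (C : Matrix (Fin N) (Fin N) ℝ) (hC : ∀ i j, C i j = ξ1 i * ξ1 j + ξ2 i * ξ2 j)
    (J : Matrix (Fin N) (Fin N) ℝ)
    (hJ : ∀ i j, J i j =
      if i = j then
        -(1 / N) * (∑ k ∈ Finset.univ.erase i, C i k * ξ1 i * ξ1 k) - 2 * ε * (N - 1) / N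
      else (1 / N) * (C i j * ξ1 i * ξ1 j) + 2 * ε / N)
    (x : Fin N → ℝ)
    (hx0 : ∀ i, ξ1 i ≠ ξ2 i → x i = 0)
    (hxs : ∑ i ∈ Finset.univ.filter (fun i => ξ1 i = ξ2 i), x i = 0) :
    J.mulVec x =
      (-2 * (((Finset.univ.filter (fun i => ξ1 i = ξ2 i)).card : ℝ) / N + ε)) • x := by
  classical
  have hNpos : (0:ℝ) < N := by exact_mod_cast hN
  have hN0 : (N:ℝ) ≠ 0 := ne_of_gt hNpos
  set S := Finset.univ.filter (fun i => ξ1 i = ξ2 i) with hS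
  set m : ℝ := (S.card : ℝ) with hm
  have hsq1 : ∀ i, ξ1 i * ξ1 i = 1 := fun i => by
    rcases hξ1 i with h | h <;> rw [h] <;> norm_num
  have hsq2 : ∀ i, ξ2 i * ξ2 i = 1 := fun i => by
    rcases hξ2 i with h | h <;> rw [h] <;> norm_num
  have hprod : ∀ k, ξ1 k * ξ2 k = if ξ1 k = ξ2 k then 1 else -1 := by
    intro k
    rcases hξ1 k with h1 | h1 <;> rcases hξ2 k with h2 | h2 <;>
      simp [h1, h2] <;> norm_num
  have hmemS : ∀ k, k ∈ S ↔ ξ1 k = ξ2 k := by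
    intro k; simp [hS]
  have hcards : S.card + (Finset.univ.filter (fun i => ¬ ξ1 i = ξ2 i)).card = N := by
    rw [Finset.card_filter_add_card_filter_not]
    simp
  have hsumprod : ∑ k, ξ1 k * ξ2 k = 2 * m - N := by
    have h1 : ∑ k, ξ1 k * ξ2 k = ∑ k, (if ξ1 k = ξ2 k then (1:ℝ) else -1) :=
      Finset.sum_congr rfl fun k _ => hprod k
    rw [h1, Finset.sum_ite, Finset.sum_const, Finset.sum_const]
    have h2 : ((Finset.univ.filter (fun i => ¬ ξ1 i = ξ2 i)).card : ℝ) = N - m := by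
      have := hcards
      have : ((S.card : ℝ)) + ((Finset.univ.filter (fun i => ¬ ξ1 i = ξ2 i)).card : ℝ)
          = N := by exact_mod_cast this
      linarith
    simp only [nsmul_eq_mul, mul_one, mul_neg_one]
    rw [h2, ← hm]
    ring
  funext i
  have hmv : J.mulVec x i = ∑ j, J i j * x j := by
    simp [Matrix.mulVec, dotProduct]
  have hrestrict : ∑ j, J i j * x j = ∑ j ∈ S, J i j * x j := by
    symm
    apply Finset.sum_subset (Finset.subset_univ S)
    intro j _ hj
    have hj' : ξ1 j ≠ ξ2 j := by
      intro h; exact hj ((hmemS j).mpr h)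
    rw [hx0 j hj', mul_zero]
  rw [hmv, hrestrict]
  by_cases hi : ξ1 i = ξ2 i
  · -- i ∈ S
    have hiS : i ∈ S := (hmemS i).mpr hi
    have e1 : ξ1 i * ξ2 i = 1 := by rw [hprod, if_pos hi]
    have hoff : ∀ j ∈ S.erase i, J i j * x j = (2 + 2 * ε) / N * x j := by
      intro j hj
      obtain ⟨hji, hjS⟩ := Finset.mem_erase.mp hj
      have hj2 : ξ1 j = ξ2 j := (hmemS j).mp hjS
      have e2 : ξ1 j * ξ2 j = 1 := by rw [hprod, if_pos hj2]
      rw [hJ, if_neg (fun h => hji h.symm), hC]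
      have key : (ξ1 i * ξ1 j + ξ2 i * ξ2 j) * ξ1 i * ξ1 j = 2 := by
        linear_combination (ξ1 j * ξ1 j) * hsq1 i + hsq1 j + (ξ1 j * ξ2 j) * e1 + e2
      rw [key]
      ring
    have hdiagsum : ∑ k ∈ Finset.univ.erase i, C i k * ξ1 i * ξ1 k = 2 * m - 2 := by
      have h1 : ∀ k, C i k * ξ1 i * ξ1 k = 1 + ξ1 k * ξ2 k := by
        intro k
        rw [hC]
        linear_combination (ξ1 k * ξ1 k) * hsq1 i + hsq1 k + (ξ1 k * ξ2 k) * e1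
      calc ∑ k ∈ Finset.univ.erase i, C i k * ξ1 i * ξ1 k
          = ∑ k ∈ Finset.univ.erase i, (1 + ξ1 k * ξ2 k) :=
            Finset.sum_congr rfl fun k _ => h1 k
        _ = ∑ k, (1 + ξ1 k * ξ2 k) - (1 + ξ1 i * ξ2 i) :=
            Finset.sum_erase_eq_sub (Finset.mem_univ i)
        _ = 2 * m - 2 := by
            rw [Finset.sum_add_distrib, Finset.sum_const, hsumprod, e1]
            simp [Finset.card_univ]
            ring
    have hsum_erase : ∑ j ∈ S.erase i, x j = -x i := by
      have := Finset.sum_erase_eq_sub (f := x) hiS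
      rw [this, hxs]
      ring
    rw [← Finset.add_sum_erase _ _ hiS, Finset.sum_congr rfl hoff,
      ← Finset.mul_sum, hsum_erase, hJ, if_pos rfl, hdiagsum]
    have hxival : x i = x i := rfl
    show _ = (-2 * (m / N + ε)) * x i
    field_simp
    ring
  · -- i ∉ S : x i = 0
    have hxi : x i = 0 := hx0 i hi
    have e1 : ξ1 i * ξ2 i = -1 := by rw [hprod, if_neg hi]
    have hoff : ∀ j ∈ S, J i j * x j = 2 * ε / N * x j := by
      intro j hjS
      have hj2 : ξ1 j = ξ2 j := (hmemS j).mp hjS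
      have e2 : ξ1 j * ξ2 j = 1 := by rw [hprod, if_pos hj2]
      have hji : i ≠ j := by
        intro h; subst h; exact hi hj2
      rw [hJ, if_neg hji, hC]
      have key : (ξ1 i * ξ1 j + ξ2 i * ξ2 j) * ξ1 i * ξ1 j = 0 := by
        linear_combination (ξ1 j * ξ1 j) * hsq1 i + hsq1 j + (ξ1 j * ξ2 j) * e1 - e2
      rw [key]
      ring
    rw [Finset.sum_congr rfl hoff, ← Finset.mul_sum, hxs]
    show _ = (-2 * (m / N + ε)) * x i
    rw [hxi]
    ring
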